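/- Let F : Cvx_n → (-∞,∞] be linear (F(αφ+βψ) = αF(φ)+βF(ψ) for α,β>0) and increasing on proper lsc convex functions on ℝⁿ, and assume there exists φ_0 with ∫ e^{-φ_0*} > 0 and F(φ_0) < ∞. Then F(φ) < ∞ for every convex function φ of linear growth; in particular F(|x|) < ∞ and F of every affine function is finite. -/

import Mathlib

open Filter Topology MeasureTheory

/-- `φ : ℝⁿ → (-∞,∞]` is a proper lower semi-continuous convex function. -/
def IsLscConvexFn {n : ℕ} (φ : EuclideanSpace ℝ (Fin n) → EReal) : Prop :=
  LowerSemicontinuous φ ∧ (∀ x, φ x ≠ ⊥) ∧ (∃ x, φ x ≠ ⊤) ∧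
    ∀ x y : EuclideanSpace ℝ (Fin n), ∀ a b : ℝ, 0 < a → 0 < b → a + b = 1 →
      φ (a • x + b • y) ≤ (a : EReal) * φ x + (b : EReal) * φ y

/-- The Legendre transform. -/
noncomputable def legendre {n : ℕ} (φ : EuclideanSpace ℝ (Fin n) → EReal)
    (y : EuclideanSpace ℝ (Fin n)) : EReal :=
  ⨆ x : EuclideanSpace ℝ (Fin n), ((inner ℝ x y : ℝ) : EReal) - φ x

/-- The log-concave function `e^{-φ*}` as an `ℝ≥0∞`-valued function. -/
noncomputable def expNegLegendre {n : ℕ} (φ : EuclideanSpace ℝ (Fin n) → EReal)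
    (x : EuclideanSpace ℝ (Fin n)) : ENNReal :=
  if legendre φ x = ⊤ then 0 else ENNReal.ofReal (Real.exp (-(legendre φ x).toReal))

lemma isLscConvexFn_aux {n : ℕ} (p : EuclideanSpace ℝ (Fin n)) (c d : ℝ) (hc : 0 ≤ c) :
    IsLscConvexFn (fun x : EuclideanSpace ℝ (Fin n) =>
      (((inner ℝ x p : ℝ) + c * ‖x‖ + d : ℝ) : EReal)) := by
  have hcont : Continuous fun x : EuclideanSpace ℝ (Fin n) =>
      ((inner ℝ x p : ℝ) + c * ‖x‖ + d : ℝ) := by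
    apply Continuous.add
    apply Continuous.add
    · exact Continuous.inner continuous_id continuous_const
    · exact continuous_const.mul continuous_norm
    · exact continuous_const
  refine ⟨(continuous_coe_real_ereal.comp hcont).lowerSemicontinuous, fun x => EReal.coe_ne_bot _,
    ⟨0, EReal.coe_ne_top _⟩, fun x y a b ha hb hab => ?_⟩
  rw [← EReal.coe_mul, ← EReal.coe_mul, ← EReal.coe_add, EReal.coe_le_coe_iff]
  have h1 : (inner ℝ (a • x + b • y) p : ℝ) = a * (inner ℝ x p : ℝ) + b * (inner ℝ y p : ℝ) := by
    rw [inner_add_left, real_inner_smul_left, real_inner_smul_left]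
  have h2 : ‖a • x + b • y‖ ≤ a * ‖x‖ + b * ‖y‖ := by
    calc ‖a • x + b • y‖ ≤ ‖a • x‖ + ‖b • y‖ := norm_add_le _ _
    _ = a * ‖x‖ + b * ‖y‖ := by
        rw [norm_smul, norm_smul, Real.norm_eq_abs, Real.norm_eq_abs,
          abs_of_pos ha, abs_of_pos hb]
  have h3 := mul_le_mul_of_nonneg_left h2 hc
  calc (inner ℝ (a • x + b • y) p : ℝ) + c * ‖a • x + b • y‖ + d
      ≤ (a * (inner ℝ x p : ℝ) + b * (inner ℝ y p : ℝ)) + c * (a * ‖x‖ + b * ‖y‖) + (a + b) * d := by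
        rw [h1, hab]; linarith
    _ = a * ((inner ℝ x p : ℝ) + c * ‖x‖ + d) + b * ((inner ℝ y p : ℝ) + c * ‖y‖ + d) := by ring

lemma fenchel_lb {n : ℕ} (φ : EuclideanSpace ℝ (Fin n) → EReal)
    (hφb : ∀ x, φ x ≠ ⊥) (x y : EuclideanSpace ℝ (Fin n)) (M : ℝ)
    (hL : legendre φ y ≤ (M : EReal)) :
    (((inner ℝ x y : ℝ) - M : ℝ) : EReal) ≤ φ x := by
  have h : ((inner ℝ x y : ℝ) : EReal) - φ x ≤ (M : EReal) :=
    le_trans (le_iSup (fun z => ((inner ℝ z y : ℝ) : EReal) - φ z) x) hL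
  cases hx : φ x with
  | top => exact le_top
  | bot => exact absurd hx (hφb x)
  | coe t =>
    rw [hx, ← EReal.coe_sub, EReal.coe_le_coe_iff] at h
    rw [EReal.coe_le_coe_iff]
    linarith

lemma exists_ball_legendre_le {n : ℕ} (φ₀ : EuclideanSpace ℝ (Fin n) → EReal)
    (hφ₀b : ∀ x, φ₀ x ≠ ⊥)
    (hint : 0 < ∫⁻ x, expNegLegendre φ₀ x) :
    ∃ (p : EuclideanSpace ℝ (Fin n)) (r M : ℝ), 0 < r ∧
      ∀ y ∈ Metric.closedBall p r, legendre φ₀ y ≤ (M : EReal) := by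
  set T : Set (EuclideanSpace ℝ (Fin n)) := {y | legendre φ₀ y ≠ ⊤} with hTdef
  have hT : volume T ≠ 0 := by
    intro h0
    have hsub : {y | expNegLegendre φ₀ y ≠ 0} ⊆ T := by
      intro y hy
      intro htop
      exact hy (by simp [expNegLegendre, htop])
    have hae : expNegLegendre φ₀ =ᵐ[volume] 0 := by
      rw [Filter.EventuallyEq, ae_iff]
      exact measure_mono_null hsub h0
    rw [lintegral_congr_ae hae] at hint
    simp at hint
  have hsub : T ⊆ ⋃ M : ℕ, {y | legendre φ₀ y ≤ ((M : ℝ) : EReal)} := by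
    intro y hy
    rw [Set.mem_iUnion]
    refine ⟨⌈(legendre φ₀ y).toReal⌉₊, ?_⟩
    calc legendre φ₀ y ≤ ((legendre φ₀ y).toReal : EReal) := EReal.le_coe_toReal hy
      _ ≤ _ := EReal.coe_le_coe_iff.2 (Nat.le_ceil _)
  obtain ⟨M, hM⟩ : ∃ M : ℕ, volume {y | legendre φ₀ y ≤ ((M : ℝ) : EReal)} ≠ 0 := by
    by_contra h
    push_neg at h
    exact hT (measure_mono_null hsub (measure_iUnion_null h))
  set S : Set (EuclideanSpace ℝ (Fin n)) := {y | legendre φ₀ y ≤ ((M : ℝ) : EReal)} with hSdef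
  have hconv : Convex ℝ S := by
    intro y hy z hz a b ha hb hab
    show legendre φ₀ (a • y + b • z) ≤ ((M : ℝ) : EReal)
    rw [legendre]
    apply iSup_le
    intro x
    have hinner : (inner ℝ x (a • y + b • z) : ℝ)
        = a * (inner ℝ x y : ℝ) + b * (inner ℝ x z : ℝ) := by
      rw [inner_add_right, real_inner_smul_right, real_inner_smul_right]
    cases hx : φ₀ x with
    | bot => exact absurd hx (hφ₀b x)
    | top => rw [EReal.sub_top]; exact bot_le
    | coe t =>
      have h1 : ((inner ℝ x y : ℝ) : EReal) - φ₀ x ≤ ((M : ℝ) : EReal) :=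
        le_trans (le_iSup (fun w => ((inner ℝ w y : ℝ) : EReal) - φ₀ w) x) hy
      have h2 : ((inner ℝ x z : ℝ) : EReal) - φ₀ x ≤ ((M : ℝ) : EReal) :=
        le_trans (le_iSup (fun w => ((inner ℝ w z : ℝ) : EReal) - φ₀ w) x) hz
      rw [hx, ← EReal.coe_sub, EReal.coe_le_coe_iff] at h1 h2
      rw [← EReal.coe_sub, EReal.coe_le_coe_iff, hinner]
      have h1' := mul_le_mul_of_nonneg_left h1 ha
      have h2' := mul_le_mul_of_nonneg_left h2 hb
      have key : a * (inner ℝ x y : ℝ) + b * (inner ℝ x z : ℝ) - (a + b) * t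
          ≤ (a + b) * (M : ℝ) := by linarith
      rw [hab, one_mul, one_mul] at key
      linarith
  have hint' : (interior S).Nonempty := by
    by_contra h
    rw [Set.not_nonempty_iff_eq_empty] at h
    have hspan : affineSpan ℝ S ≠ ⊤ := by
      intro htop
      have := hconv.interior_nonempty_iff_affineSpan_eq_top.2 htop
      rw [h] at this
      exact Set.not_nonempty_empty this
    exact hM (measure_mono_null (subset_affineSpan ℝ S)
      (Measure.addHaar_affineSubspace volume _ hspan))
  obtain ⟨p, hp⟩ := hint'
  obtain ⟨r₀, hr₀, hball⟩ := Metric.isOpen_iff.1 isOpen_interior p hp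
  refine ⟨p, r₀ / 2, (M : ℝ), half_pos hr₀, fun y hy => ?_⟩
  exact (Metric.closedBall_subset_ball (half_lt_self hr₀) |>.trans
    (hball.trans interior_subset)) hy

lemma lower_bound {n : ℕ} (φ₀ : EuclideanSpace ℝ (Fin n) → EReal)
    (hφ₀b : ∀ x, φ₀ x ≠ ⊥) (p : EuclideanSpace ℝ (Fin n)) (r M : ℝ) (hr : 0 < r)
    (hball : ∀ y ∈ Metric.closedBall p r, legendre φ₀ y ≤ (M : EReal)) :
    ∀ x, (((inner ℝ x p : ℝ) + r * ‖x‖ + (-M) : ℝ) : EReal) ≤ φ₀ x := by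
  intro x
  by_cases hx : x = 0
  · subst hx
    have hf := fenchel_lb φ₀ hφ₀b 0 p M (hball p (Metric.mem_closedBall_self hr.le))
    have : ((inner ℝ (0 : EuclideanSpace ℝ (Fin n)) p : ℝ) + r * ‖(0 : EuclideanSpace ℝ (Fin n))‖
        + (-M) : ℝ) = (inner ℝ (0 : EuclideanSpace ℝ (Fin n)) p : ℝ) - M := by
      simp
    rw [this]
    exact hf
  · have hxn : ‖x‖ ≠ 0 := norm_ne_zero_iff.2 hx
    set y := p + (r / ‖x‖) • x with hy
    have hymem : y ∈ Metric.closedBall p r := by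
      rw [Metric.mem_closedBall, dist_eq_norm]
      have h1 : y - p = (r / ‖x‖) • x := by rw [hy]; abel
      rw [h1, norm_smul, Real.norm_eq_abs, abs_of_nonneg (by positivity),
        div_mul_cancel₀ _ hxn]
    have hf := fenchel_lb φ₀ hφ₀b x y M (hball y hymem)
    have hiy : (inner ℝ x y : ℝ) = (inner ℝ x p : ℝ) + r * ‖x‖ := by
      rw [hy, inner_add_right, real_inner_smul_right, real_inner_self_eq_norm_mul_norm]
      field_simp
    have : ((inner ℝ x p : ℝ) + r * ‖x‖ + (-M) : ℝ) = (inner ℝ x y : ℝ) - M := by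
      rw [hiy]; ring
    rw [this]
    exact hf

lemma comb_eq {n : ℕ} (p q s : EuclideanSpace ℝ (Fin n)) (c₁ c₂ d₁ d₂ α β c d : ℝ)
    (hs : α • p + β • q = s) (hc : α * c₁ + β * c₂ = c) (hd : α * d₁ + β * d₂ = d) :
    (fun x : EuclideanSpace ℝ (Fin n) =>
        ((α : ℝ) : EReal) * (((inner ℝ x p : ℝ) + c₁ * ‖x‖ + d₁ : ℝ) : EReal)
          + ((β : ℝ) : EReal) * (((inner ℝ x q : ℝ) + c₂ * ‖x‖ + d₂ : ℝ) : EReal))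
      = fun x => (((inner ℝ x s : ℝ) + c * ‖x‖ + d : ℝ) : EReal) := by
  funext x
  rw [← EReal.coe_mul, ← EReal.coe_mul, ← EReal.coe_add]
  congr 1
  have h1 : (inner ℝ x s : ℝ) = α * (inner ℝ x p : ℝ) + β * (inner ℝ x q : ℝ) := by
    rw [← hs, inner_add_right, real_inner_smul_right, real_inner_smul_right]
  rw [h1, ← hc, ← hd]
  ring

/-- Lemma 5.1: a linear increasing functional `F : Cvx_n → (-∞,∞]` which is finite
at some `φ₀` with `∫ e^{-φ₀*} > 0` is finite on every convex function of linear
growth. -/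
theorem finite_on_linear_growth {n : ℕ}
    (F : (EuclideanSpace ℝ (Fin n) → EReal) → EReal)
    (hne : ∀ φ, F φ ≠ ⊥)
    (hlin : ∀ φ ψ : EuclideanSpace ℝ (Fin n) → EReal, ∀ α β : ℝ,
      IsLscConvexFn φ → IsLscConvexFn ψ → 0 < α → 0 < β →
      IsLscConvexFn (fun x => (α : EReal) * φ x + (β : EReal) * ψ x) →
      F (fun x => (α : EReal) * φ x + (β : EReal) * ψ x)
        = (α : EReal) * F φ + (β : EReal) * F ψ)
    (hmono : ∀ φ ψ : EuclideanSpace ℝ (Fin n) → EReal,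
      IsLscConvexFn φ → IsLscConvexFn ψ → (∀ x, φ x ≤ ψ x) → F φ ≤ F ψ)
    (φ₀ : EuclideanSpace ℝ (Fin n) → EReal) (hφ₀ : IsLscConvexFn φ₀)
    (hint : 0 < ∫⁻ x, expNegLegendre φ₀ x) (hF₀ : F φ₀ ≠ ⊤) :
    ∀ φ : EuclideanSpace ℝ (Fin n) → EReal, IsLscConvexFn φ →
      (∃ A B : ℝ, 0 < A ∧ 0 < B ∧ ∀ x, φ x ≤ ((A * ‖x‖ + B : ℝ) : EReal)) →
      F φ ≠ ⊤ := by
  obtain ⟨p, r, M, hr, hball⟩ := exists_ball_legendre_le φ₀ hφ₀.2.1 hint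
  have hlb := lower_bound φ₀ hφ₀.2.1 p r M hr hball
  have key : ∀ ψ, IsLscConvexFn ψ → (∀ x, ψ x ≤ φ₀ x) → F ψ ≠ ⊤ :=
    fun ψ hψ hle => ne_top_of_le_ne_top hF₀ (hmono ψ φ₀ hψ hφ₀ hle)
  rintro φ hφ ⟨A, B, hA, hB, hφle⟩
  set t := B * r / A with ht
  have htpos : 0 < t := by positivity
  -- the four auxiliary convex functions
  have hH : IsLscConvexFn (fun x : EuclideanSpace ℝ (Fin n) =>
      (((inner ℝ x p : ℝ) + r * ‖x‖ + (-M) : ℝ) : EReal)) := isLscConvexFn_aux p r (-M) hr.le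
  have hL : IsLscConvexFn (fun x : EuclideanSpace ℝ (Fin n) =>
      (((inner ℝ x p : ℝ) + 0 * ‖x‖ + (-M - t) : ℝ) : EReal)) := isLscConvexFn_aux p 0 (-M - t) le_rfl
  have hU : IsLscConvexFn (fun x : EuclideanSpace ℝ (Fin n) =>
      (((inner ℝ x (0 : EuclideanSpace ℝ (Fin n)) : ℝ) + r * ‖x‖ + t : ℝ) : EReal)) :=
    isLscConvexFn_aux 0 r t hr.le
  have hV : IsLscConvexFn (fun x : EuclideanSpace ℝ (Fin n) =>
      (((inner ℝ x (0 : EuclideanSpace ℝ (Fin n)) : ℝ) + A * ‖x‖ + B : ℝ) : EReal)) :=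
    isLscConvexFn_aux 0 A B hA.le
  -- F is finite on h and ℓ, being minorants of φ₀
  have hFh : F (fun x : EuclideanSpace ℝ (Fin n) =>
      (((inner ℝ x p : ℝ) + r * ‖x‖ + (-M) : ℝ) : EReal)) ≠ ⊤ := key _ hH hlb
  have hFl : F (fun x : EuclideanSpace ℝ (Fin n) =>
      (((inner ℝ x p : ℝ) + 0 * ‖x‖ + (-M - t) : ℝ) : EReal)) ≠ ⊤ := by
    refine key _ hL fun x => le_trans ?_ (hlb x)
    refine EReal.coe_le_coe_iff.2 ?_
    nlinarith [mul_nonneg hr.le (norm_nonneg x)]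
  -- h = u + ℓ, hence F is finite on u
  have hcomb1 := comb_eq (0 : EuclideanSpace ℝ (Fin n)) p p r 0 t (-M - t) 1 1 r (-M)
    (by simp) (by ring) (by ring)
  have heq1 := hlin _ _ 1 1 hU hL one_pos one_pos (by rw [hcomb1]; exact hH)
  rw [hcomb1] at heq1
  simp only [EReal.coe_one, one_mul] at heq1
  have hFu : F (fun x : EuclideanSpace ℝ (Fin n) =>
      (((inner ℝ x (0 : EuclideanSpace ℝ (Fin n)) : ℝ) + r * ‖x‖ + t : ℝ) : EReal)) ≠ ⊤ := by
    intro htop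
    rw [htop, EReal.top_add_of_ne_bot (hne _)] at heq1
    exact hFh heq1
  -- v = (A/2r)·u + (A/2r)·u, hence F is finite on v
  have hrne : r ≠ 0 := hr.ne'
  have hAne : A ≠ 0 := hA.ne'
  have hcomb2 := comb_eq (0 : EuclideanSpace ℝ (Fin n)) (0 : EuclideanSpace ℝ (Fin n))
    (0 : EuclideanSpace ℝ (Fin n)) r r t t (A / (2 * r)) (A / (2 * r)) A B
    (by simp) (by field_simp; ring) (by rw [ht]; field_simp; ring)
  have hc2pos : 0 < A / (2 * r) := by positivity
  have heq2 := hlin _ _ (A / (2 * r)) (A / (2 * r)) hU hU hc2pos hc2pos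
    (by rw [hcomb2]; exact hV)
  rw [hcomb2] at heq2
  have hFureal := (EReal.coe_toReal hFu (hne _)).symm
  rw [hFureal, ← EReal.coe_mul, ← EReal.coe_add] at heq2
  have hFv : F (fun x : EuclideanSpace ℝ (Fin n) =>
      (((inner ℝ x (0 : EuclideanSpace ℝ (Fin n)) : ℝ) + A * ‖x‖ + B : ℝ) : EReal)) ≠ ⊤ := by
    rw [heq2]; exact EReal.coe_ne_top _
  -- φ ≤ v, conclude
  refine ne_top_of_le_ne_top hFv (hmono φ _ hφ hV fun x => le_trans (hφle x) ?_)
  exact EReal.coe_le_coe_iff.2 (by simp)
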